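/- arXiv:2502.17950 — 4 statements merged into one kernel-verified Lean document; each statement's English description precedes it below -/
import Mathlib

section
/- Let 𝒦f(ω) = (1/(2π²)) ∫_{ℝ³} ‖ω-η‖^(-2) f(η) dη. For every ϑ > 1 and every integrable f : ℝ³ → ℂ, ∫_{ℝ³} (1+‖ω‖²)^(-ϑ/2) |𝒦f(ω)| dω ≤ κ(ϑ) ∫_{ℝ³} |f(ω)| dω, where κ(ϑ) = 2 Γ((ϑ-1)/2)/(√π Γ(ϑ/2)). -/
open MeasureTheory Real
open Set
open scoped ENNReal


lemma gammaIntegrableOn {s b : ℝ} (hs : 0 < s) (hb : 0 < b) :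
    IntegrableOn (fun t : ℝ => t ^ (s - 1) * Real.exp (-(b * t))) (Set.Ioi 0) := by
  have h0 : IntegrableOn (fun x : ℝ => Real.exp (-x) * x ^ (s - 1)) (Set.Ioi 0) :=
    Real.GammaIntegral_convergent hs
  have h2 : IntegrableOn (fun t : ℝ => Real.exp (-(b * t)) * (b * t) ^ (s - 1)) (Set.Ioi 0) := by
    have := (integrableOn_Ioi_comp_mul_left_iff
      (fun x : ℝ => Real.exp (-x) * x ^ (s - 1)) 0 hb).mpr
    rw [mul_zero] at this
    simpa using this h0
  refine ((h2.smul (((b : ℝ) ^ (s - 1))⁻¹)).congr ?_)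
  filter_upwards [ae_restrict_mem measurableSet_Ioi] with t ht
  have hbne : (b : ℝ) ^ (s - 1) ≠ 0 := (Real.rpow_pos_of_pos hb _).ne'
  have : (b * t) ^ (s - 1) = b ^ (s - 1) * t ^ (s - 1) :=
    Real.mul_rpow hb.le (le_of_lt ht)
  simp only [Pi.smul_apply, smul_eq_mul, this]
  field_simp

lemma lint_gamma_rate {s b : ℝ} (hs : 0 < s) (hb : 0 < b) :
    ∫⁻ t in Set.Ioi (0:ℝ), ENNReal.ofReal (t ^ (s - 1) * Real.exp (-(b * t)))
      = ENNReal.ofReal (Real.Gamma s * b ^ (-s)) := by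
  rw [← ofReal_integral_eq_lintegral_ofReal (gammaIntegrableOn hs hb) ?_]
  · rw [integral_rpow_mul_exp_neg_mul_Ioi hs hb]
    congr 1
    rw [one_div, Real.inv_rpow hb.le, ← Real.rpow_neg hb.le]
    ring
  · filter_upwards [ae_restrict_mem measurableSet_Ioi] with t ht
    have : (0:ℝ) < t := ht
    positivity

lemma J_lintegral (s : ℝ) (hs : 1/2 < s) :
    ∫⁻ y in Set.Ioi (0:ℝ), ENNReal.ofReal ((1 + y ^ 2) ^ (-s))
      = ENNReal.ofReal (Real.sqrt π * Real.Gamma (s - 1/2) / (2 * Real.Gamma s)) := by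
  have hs0 : 0 < s := by linarith
  have hs2 : 0 < s - 1/2 := by linarith
  have hΓ : 0 < Real.Gamma s := Real.Gamma_pos_of_pos hs0
  have hΓ2 : 0 < Real.Gamma (s - 1/2) := Real.Gamma_pos_of_pos hs2
  have hmeas : Measurable fun y : ℝ => ENNReal.ofReal ((1 + y ^ 2) ^ (-s)) := by
    fun_prop
  -- step 1 : multiply by Γ s and express as double lintegral
  have key : ENNReal.ofReal (Real.Gamma s)
        * ∫⁻ y in Set.Ioi (0:ℝ), ENNReal.ofReal ((1 + y ^ 2) ^ (-s))
      = ENNReal.ofReal (Real.sqrt π / 2 * Real.Gamma (s - 1/2)) := by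
    rw [← lintegral_const_mul _ hmeas]
    have h1 : ∀ y : ℝ, ENNReal.ofReal (Real.Gamma s) * ENNReal.ofReal ((1 + y ^ 2) ^ (-s))
        = ∫⁻ t in Set.Ioi (0:ℝ),
            ENNReal.ofReal (t ^ (s - 1) * Real.exp (-((1 + y ^ 2) * t))) := by
      intro y
      have hb : (0:ℝ) < 1 + y ^ 2 := by positivity
      rw [lint_gamma_rate hs0 hb, ENNReal.ofReal_mul hΓ.le]
    simp_rw [h1]
    have hswap : AEMeasurable
        (Function.uncurry fun (y t : ℝ) => ENNReal.ofReal (t ^ (s - 1) * Real.exp (-((1 + y ^ 2) * t))))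
        ((volume.restrict (Set.Ioi 0)).prod (volume.restrict (Set.Ioi 0))) := by
      apply Measurable.aemeasurable
      apply Measurable.ennreal_ofReal
      fun_prop
    rw [lintegral_lintegral_swap hswap]
    -- inner gaussian integral
    have h2 : ∀ t ∈ Set.Ioi (0:ℝ),
        (∫⁻ y in Set.Ioi (0:ℝ), ENNReal.ofReal (t ^ (s - 1) * Real.exp (-((1 + y ^ 2) * t))))
          = ENNReal.ofReal (Real.sqrt π / 2 * (Real.exp (-t) * t ^ (s - 1/2 - 1))) := by
      intro t ht
      have ht' : (0:ℝ) < t := ht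
      have hsplit : ∀ y : ℝ, t ^ (s - 1) * Real.exp (-((1 + y ^ 2) * t))
          = (t ^ (s - 1) * Real.exp (-t)) * Real.exp (-t * y ^ 2) := by
        intro y
        rw [show -((1 + y ^ 2) * t) = -t + -t * y ^ 2 by ring, Real.exp_add]
        ring
      simp_rw [hsplit]
      have hnn : 0 ≤ t ^ (s - 1) * Real.exp (-t) := by positivity
      simp_rw [ENNReal.ofReal_mul hnn]
      rw [lintegral_const_mul _ (by fun_prop)]
      rw [← ofReal_integral_eq_lintegral_ofReal
        ((integrable_exp_neg_mul_sq ht').integrableOn)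
        (Filter.Eventually.of_forall fun y => (Real.exp_pos _).le)]
      rw [integral_gaussian_Ioi t, ← ENNReal.ofReal_mul hnn]
      congr 1
      have h3 : Real.sqrt (π / t) = Real.sqrt π * t ^ (-(1/2) : ℝ) := by
        rw [Real.sqrt_div pi_pos.le, Real.sqrt_eq_rpow t, div_eq_mul_inv,
          ← Real.rpow_neg ht'.le]
      have h4 : t ^ (s - 1) * t ^ (-(1/2) : ℝ) = t ^ (s - 1/2 - 1) := by
        rw [← Real.rpow_add ht']
        congr 1
        ring
      rw [h3, ← h4]
      ring
    rw [setLIntegral_congr_fun measurableSet_Ioi h2]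
    have hnn2 : (0:ℝ) ≤ Real.sqrt π / 2 := by positivity
    simp_rw [ENNReal.ofReal_mul hnn2]
    rw [lintegral_const_mul _ (by fun_prop)]
    rw [← ofReal_integral_eq_lintegral_ofReal ?_ ?_]
    · rw [show (∫ t in Set.Ioi (0:ℝ), Real.exp (-t) * t ^ (s - 1/2 - 1))
          = Real.Gamma (s - 1/2) from (Real.Gamma_eq_integral hs2).symm]
    · exact Real.GammaIntegral_convergent hs2
    · filter_upwards [ae_restrict_mem measurableSet_Ioi] with t ht
      have : (0:ℝ) < t := ht
      positivity
  -- cancel Γ s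
  have hne : ENNReal.ofReal (Real.Gamma s) ≠ 0 := by
    simp [ENNReal.ofReal_eq_zero, not_le, hΓ]
  have hnetop : ENNReal.ofReal (Real.Gamma s) ≠ ⊤ := ENNReal.ofReal_ne_top
  rw [← ENNReal.mul_right_inj hne hnetop, key, ← ENNReal.ofReal_mul hΓ.le]
  congr 1
  field_simp


local notation "E3" => EuclideanSpace ℝ (Fin 3)

lemma volume_ball_E3 : (volume : Measure E3) (Metric.ball 0 1)
    = ENNReal.ofReal (4 / 3 * π) := by
  rw [EuclideanSpace.volume_ball (x := (0 : E3)) (r := 1)]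
  have hcard : (Fintype.card (Fin 3) : ℝ) = 3 := by simp
  rw [show ((Fintype.card (Fin 3) : ℝ) / 2 + 1) = 5/2 by rw [hcard]; norm_num]
  have h52 : Real.Gamma (5/2) = 3/4 * Real.sqrt π := by
    rw [show (5/2 : ℝ) = (3/2) + 1 by norm_num, Real.Gamma_add_one (by norm_num),
      show (3/2 : ℝ) = (1/2) + 1 by norm_num, Real.Gamma_add_one (by norm_num),
      Real.Gamma_one_half_eq]
    ring
  have hs : Real.sqrt π ^ Fintype.card (Fin 3) = π * Real.sqrt π := by
    rw [show Fintype.card (Fin 3) = 3 by simp, pow_succ, pow_two,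
      Real.mul_self_sqrt pi_pos.le]
  rw [hs, h52]
  have hsne : Real.sqrt π ≠ 0 := (Real.sqrt_pos.mpr pi_pos).ne'
  rw [show π * Real.sqrt π / (3/4 * Real.sqrt π) = 4/3*π by field_simp]
  simp

lemma lintegral_norm_E3 (g : ℝ → ℝ≥0∞) (hg : Measurable g) :
    ∫⁻ x : E3, g ‖x‖ = ENNReal.ofReal (4 * π)
        * ∫⁻ y in Set.Ioi (0:ℝ), ENNReal.ofReal (y ^ 2) * g y := by
  have hdim : Module.finrank ℝ (EuclideanSpace ℝ (Fin 3)) = 3 := by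
    simp [finrank_euclideanSpace]
  calc
    ∫⁻ x : E3, g ‖x‖ = ∫⁻ x in ({0}ᶜ : Set E3), g ‖x‖ := by
      rw [restrict_compl_singleton]
    _ = ∫⁻ x : (({0}ᶜ : Set E3)), g ‖(x : E3)‖ ∂((volume : Measure E3).comap (↑)) :=
      (lintegral_subtype_comap (measurableSet_singleton 0).compl _).symm
    _ = ∫⁻ p : (Metric.sphere (0:E3) 1 × Set.Ioi (0:ℝ)), g p.2
          ∂(((volume : Measure E3).toSphere).prod (Measure.volumeIoiPow 2)) := by
      have h := ((volume : Measure E3).measurePreserving_homeomorphUnitSphereProd.lintegral_comp_emb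
        (Homeomorph.measurableEmbedding _)
        ((g ∘ Subtype.val ∘ Prod.snd)))
      simpa [Function.comp, hdim] using h
    _ = ((volume : Measure E3).toSphere univ)
          * ∫⁻ r : Set.Ioi (0:ℝ), g r ∂(Measure.volumeIoiPow 2) := by
      rw [lintegral_prod _ ((show Measurable fun p : (Metric.sphere (0:E3) 1 × Set.Ioi (0:ℝ)) =>
        g ↑p.2 from hg.comp (measurable_subtype_coe.comp measurable_snd)).aemeasurable)]
      simp [lintegral_const, mul_comm]
    _ = ENNReal.ofReal (4 * π) * ∫⁻ y in Set.Ioi (0:ℝ), ENNReal.ofReal (y ^ 2) * g y := by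
      congr 1
      · rw [Measure.toSphere_apply_univ, hdim, volume_ball_E3]
        rw [show ((3:ℕ) : ℝ≥0∞) = ENNReal.ofReal 3 by simp,
          ← ENNReal.ofReal_mul (by norm_num)]
        congr 1
        ring
      · rw [Measure.volumeIoiPow,
          lintegral_withDensity_eq_lintegral_mul _
            ((measurable_subtype_coe.pow_const 2).ennreal_ofReal)
            (
          show Measurable fun r : (Set.Ioi (0:ℝ)) => g ↑r from hg.comp measurable_subtype_coe)]
        simp only [Pi.mul_apply]
        rw [lintegral_subtype_comap measurableSet_Ioi
          (fun y : ℝ => ENNReal.ofReal (y ^ 2) * g y)]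

lemma value_E3 {ϑ : ℝ} (hϑ : 1 < ϑ) :
    ∫⁻ ω : E3, ENNReal.ofReal ((1 + ‖ω‖ ^ 2) ^ (-ϑ / 2))
        * ENNReal.ofReal (‖ω‖ ^ (-(2:ℝ)))
      = ENNReal.ofReal (4 * π)
        * ENNReal.ofReal (Real.sqrt π * Real.Gamma (ϑ/2 - 1/2) / (2 * Real.Gamma (ϑ/2))) := by
  set g : ℝ → ℝ≥0∞ := fun y =>
    ENNReal.ofReal ((1 + y ^ 2) ^ (-ϑ / 2)) * ENNReal.ofReal (y ^ (-(2:ℝ))) with hgdef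
  have hg : Measurable g := by fun_prop
  have h0 : (∫⁻ ω : E3, ENNReal.ofReal ((1 + ‖ω‖ ^ 2) ^ (-ϑ / 2))
      * ENNReal.ofReal (‖ω‖ ^ (-(2:ℝ)))) = ∫⁻ x : E3, g ‖x‖ := rfl
  rw [h0, lintegral_norm_E3 g hg]
  congr 1
  have h1 : ∀ y ∈ Set.Ioi (0:ℝ), ENNReal.ofReal (y ^ 2) * g y
      = ENNReal.ofReal ((1 + y ^ 2) ^ (-(ϑ/2))) := by
    intro y hy
    have hy' : (0:ℝ) < y := hy
    have hsq : y ^ (-(2:ℝ)) = (y ^ 2)⁻¹ := by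
      rw [Real.rpow_neg hy'.le, Real.rpow_two]
    rw [hgdef]
    simp only
    rw [hsq, mul_comm (ENNReal.ofReal ((1 + y ^ 2) ^ (-ϑ / 2))), ← mul_assoc,
      ← ENNReal.ofReal_mul (by positivity), mul_inv_cancel₀ (by positivity), ENNReal.ofReal_one,
      one_mul, neg_div]
  rw [setLIntegral_congr_fun measurableSet_Ioi
    h1]
  rw [J_lintegral (ϑ/2) (by linarith)]

lemma split_E3 {ϑ : ℝ} (hϑ : 1 < ϑ) (η : E3) :
    ∫⁻ ω : E3, ENNReal.ofReal ((1 + ‖ω‖ ^ 2) ^ (-ϑ / 2))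
        * ENNReal.ofReal (‖ω - η‖ ^ (-(2:ℝ)))
      ≤ 2 * ∫⁻ ω : E3, ENNReal.ofReal ((1 + ‖ω‖ ^ 2) ^ (-ϑ / 2))
        * ENNReal.ofReal (‖ω‖ ^ (-(2:ℝ))) := by
  set F : E3 → ℝ≥0∞ := fun ω => ENNReal.ofReal ((1 + ‖ω‖ ^ 2) ^ (-ϑ / 2)) with hF
  set G : E3 → ℝ≥0∞ := fun ω => ENNReal.ofReal (‖ω‖ ^ (-(2:ℝ))) with hG
  have hFmeas : Measurable F := by fun_prop
  have hGmeas : Measurable G := by fun_prop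
  set H : Set E3 := {ω | ‖ω‖ ≤ ‖ω - η‖} with hHdef
  have hH : MeasurableSet H :=
    measurableSet_le measurable_norm ((measurable_id.sub_const η).norm)
  have htot : ∫⁻ ω : E3, F ω * G (ω - η)
      = (∫⁻ ω in H, F ω * G (ω - η)) + ∫⁻ ω in Hᶜ, F ω * G (ω - η) :=
    (lintegral_add_compl _ hH).symm
  have hzero : ∀ᵐ ω : E3 ∂volume, ω ≠ 0 := by
    rw [ae_iff]
    simp only [not_not, Set.setOf_eq_eq_singleton]
    exact measure_singleton _
  have hbound1 : (∫⁻ ω in H, F ω * G (ω - η)) ≤ ∫⁻ ω : E3, F ω * G ω := by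
    refine le_trans (lintegral_mono_ae ?_) (setLIntegral_le_lintegral _ _)
    filter_upwards [ae_restrict_mem hH, ae_restrict_of_ae hzero] with ω hmem hne
    have h1 : (0:ℝ) < ‖ω‖ := norm_pos_iff.mpr hne
    have h2 : ‖ω - η‖ ^ (-(2:ℝ)) ≤ ‖ω‖ ^ (-(2:ℝ)) :=
      Real.rpow_le_rpow_of_nonpos h1 hmem (by norm_num)
    exact mul_le_mul_right (ENNReal.ofReal_le_ofReal h2) _
  have hbound2 : (∫⁻ ω in Hᶜ, F ω * G (ω - η)) ≤ ∫⁻ ω : E3, F ω * G ω := by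
    have hstep : (∫⁻ ω in Hᶜ, F ω * G (ω - η)) ≤ ∫⁻ ω in Hᶜ, F (ω - η) * G (ω - η) := by
      refine lintegral_mono_ae ?_
      filter_upwards [ae_restrict_mem hH.compl] with ω hmem
      have hlt : ‖ω - η‖ ≤ ‖ω‖ := le_of_not_ge hmem
      have h2 : (1 + ‖ω‖ ^ 2) ^ (-ϑ / 2) ≤ (1 + ‖ω - η‖ ^ 2) ^ (-ϑ / 2) := by
        rw [show (-ϑ / 2 : ℝ) = -(ϑ/2) by ring]
        refine Real.rpow_le_rpow_of_nonpos (by positivity) ?_ (by linarith)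
        have : ‖ω - η‖ ^ 2 ≤ ‖ω‖ ^ 2 := by
          exact pow_le_pow_left₀ (norm_nonneg _) hlt 2
        linarith
      exact mul_le_mul_left (ENNReal.ofReal_le_ofReal h2) _
    refine hstep.trans ?_
    refine le_trans (setLIntegral_le_lintegral _ _) (le_of_eq ?_)
    exact (measurePreserving_sub_right volume η).lintegral_comp
      (hFmeas.mul hGmeas)
  calc ∫⁻ ω : E3, F ω * G (ω - η)
      = (∫⁻ ω in H, F ω * G (ω - η)) + ∫⁻ ω in Hᶜ, F ω * G (ω - η) := htot
    _ ≤ (∫⁻ ω : E3, F ω * G ω) + ∫⁻ ω : E3, F ω * G ω := add_le_add hbound1 hbound2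
    _ = 2 * ∫⁻ ω : E3, F ω * G ω := (two_mul _).symm

noncomputable def Kop (f : EuclideanSpace ℝ (Fin 3) → ℂ)
    (ω : EuclideanSpace ℝ (Fin 3)) : ℂ :=
  ((1 / (2 * Real.pi ^ 2)) : ℝ) •
    ∫ η : EuclideanSpace ℝ (Fin 3), (‖ω - η‖ ^ (-(2 : ℝ)) : ℝ) • f η

theorem stmt9 (ϑ : ℝ) (hϑ : 1 < ϑ) (f : EuclideanSpace ℝ (Fin 3) → ℂ)
    (hf : Integrable f) :
    ∫ ω : EuclideanSpace ℝ (Fin 3), (1 + ‖ω‖ ^ 2) ^ (-ϑ / 2) * ‖Kop f ω‖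
      ≤ (2 * Real.Gamma ((ϑ - 1) / 2) / (Real.sqrt Real.pi * Real.Gamma (ϑ / 2))) *
          ∫ ω : EuclideanSpace ℝ (Fin 3), ‖f ω‖ := by
  classical
  set c : ℝ := 1 / (2 * Real.pi ^ 2) with hcdef
  have hc : 0 ≤ c := by positivity
  set κ : ℝ := 2 * Real.Gamma ((ϑ - 1) / 2) / (Real.sqrt Real.pi * Real.Gamma (ϑ / 2)) with hκdef
  have hΓ1 : 0 < Real.Gamma ((ϑ - 1) / 2) := Real.Gamma_pos_of_pos (by linarith)
  have hΓ2 : 0 < Real.Gamma (ϑ / 2) := Real.Gamma_pos_of_pos (by linarith)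
  have hκpos : 0 < κ := by
    rw [hκdef]
    have := Real.sqrt_pos.mpr pi_pos
    positivity
  -- measurable representative of f
  set f' : E3 → ℂ := hf.1.mk f with hf'def
  have hf'sm : StronglyMeasurable f' := hf.1.stronglyMeasurable_mk
  have hae : f =ᵐ[volume] f' := hf.1.ae_eq_mk
  have hKeq : ∀ ω, Kop f ω = Kop f' ω := by
    intro ω
    unfold Kop
    congr 1
    refine integral_congr_ae ?_
    filter_upwards [hae] with η hη
    rw [hη]
  -- measurability of Kop f'
  have hker : StronglyMeasurable fun p : E3 × E3 => (‖p.1 - p.2‖ ^ (-(2:ℝ)) : ℝ) • f' p.2 := by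
    apply Measurable.stronglyMeasurable
    exact (by fun_prop : Measurable fun p : E3 × E3 => (‖p.1 - p.2‖ ^ (-(2:ℝ)) : ℝ)).smul
      (hf'sm.measurable.comp measurable_snd)
  have hK'sm : StronglyMeasurable fun ω : E3 => ∫ η, (‖ω - η‖ ^ (-(2:ℝ)) : ℝ) • f' η :=
    hker.integral_prod_right'
  have hKmeas : Measurable (Kop f') := by
    unfold Kop
    exact (hK'sm.measurable.const_smul c)
  set Fθ : E3 → ℝ≥0∞ := fun ω => ENNReal.ofReal ((1 + ‖ω‖ ^ 2) ^ (-ϑ / 2)) with hFdef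
  set G : E3 → ℝ≥0∞ := fun ω => ENNReal.ofReal (‖ω‖ ^ (-(2:ℝ))) with hGdef
  have hFmeas : Measurable Fθ := by fun_prop
  set N : E3 → ℝ≥0∞ := fun η => (‖f' η‖₊ : ℝ≥0∞) with hNdef
  have hNmeas : Measurable N := hf'sm.measurable.nnnorm.coe_nnreal_ennreal
  have hNae : (fun η : E3 => (‖f η‖₊ : ℝ≥0∞)) =ᵐ[volume] N := by
    filter_upwards [hae] with η hη
    rw [hNdef, hη]
  -- pointwise bound on the kernel operator
  have hpt : ∀ ω : E3, (‖Kop f ω‖₊ : ℝ≥0∞)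
      ≤ ENNReal.ofReal c * ∫⁻ η, G (ω - η) * N η := by
    intro ω
    have h1 : (‖Kop f ω‖₊ : ℝ≥0∞)
        = ENNReal.ofReal c * (‖∫ η, (‖ω - η‖ ^ (-(2:ℝ)) : ℝ) • f η‖₊ : ℝ≥0∞) := by
      rw [Kop, nnnorm_smul, ENNReal.coe_mul, ← enorm_eq_nnnorm, Real.enorm_eq_ofReal hc]
    rw [h1]
    refine mul_le_mul_right ?_ _
    refine le_trans (enorm_integral_le_lintegral_enorm _) (le_of_eq ?_)
    have h2 : ∀ η : E3, (‖(‖ω - η‖ ^ (-(2:ℝ)) : ℝ) • f η‖₊ : ℝ≥0∞)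
        = G (ω - η) * (‖f η‖₊ : ℝ≥0∞) := by
      intro η
      rw [nnnorm_smul, ENNReal.coe_mul, ← enorm_eq_nnnorm,
        Real.enorm_eq_ofReal (Real.rpow_nonneg (norm_nonneg _) _)]
    simp only [enorm_eq_nnnorm]
    simp_rw [h2]
    refine lintegral_congr_ae ?_
    filter_upwards [hNae] with η hη
    rw [hη]
  -- value of the convolution-type integral
  have hJval : ∫⁻ ω : E3, Fθ ω * G ω
      = ENNReal.ofReal (4 * π)
        * ENNReal.ofReal (Real.sqrt π * Real.Gamma (ϑ/2 - 1/2) / (2 * Real.Gamma (ϑ/2))) :=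
    value_E3 hϑ
  have hsplit : ∀ η : E3, ∫⁻ ω : E3, Fθ ω * G (ω - η) ≤ 2 * ∫⁻ ω : E3, Fθ ω * G ω :=
    fun η => split_E3 hϑ η
  -- the main chain of inequalities
  have hkernel_meas : Measurable (Function.uncurry fun (ω η : E3) => G (ω - η) * N η) := by
    apply Measurable.mul (f := fun p : E3 × E3 => G (p.1 - p.2)) (g := fun p => N p.2)
    · exact (by fun_prop : Measurable fun p : E3 × E3 =>
        ENNReal.ofReal (‖p.1 - p.2‖ ^ (-(2:ℝ))))
    · exact hNmeas.comp measurable_snd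
  have hinner_meas : Measurable fun ω : E3 => ∫⁻ η, G (ω - η) * N η :=
    hkernel_meas.lintegral_prod_right'
  have hchain : ∫⁻ ω : E3, Fθ ω * (‖Kop f ω‖₊ : ℝ≥0∞)
      ≤ ENNReal.ofReal κ * ∫⁻ η : E3, N η := by
    calc ∫⁻ ω : E3, Fθ ω * (‖Kop f ω‖₊ : ℝ≥0∞)
        ≤ ∫⁻ ω : E3, Fθ ω * (ENNReal.ofReal c * ∫⁻ η, G (ω - η) * N η) :=
          lintegral_mono fun ω => mul_le_mul_right (hpt ω) _
      _ = ENNReal.ofReal c * ∫⁻ ω : E3, Fθ ω * ∫⁻ η, G (ω - η) * N η := by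
          rw [← lintegral_const_mul (f := fun ω => Fθ ω * ∫⁻ η, G (ω - η) * N η) _ (hFmeas.mul hinner_meas)]
          congr 1
          funext ω
          ring
      _ = ENNReal.ofReal c * ∫⁻ ω : E3, ∫⁻ η, Fθ ω * (G (ω - η) * N η) := by
          congr 1
          refine lintegral_congr fun ω => ?_
          rw [lintegral_const_mul _ ?_]
          exact (by fun_prop : Measurable fun η : E3 =>
            ENNReal.ofReal (‖ω - η‖ ^ (-(2:ℝ)))).mul hNmeas
      _ = ENNReal.ofReal c * ∫⁻ η : E3, ∫⁻ ω, Fθ ω * (G (ω - η) * N η) := by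
          congr 1
          refine lintegral_lintegral_swap ?_
          apply Measurable.aemeasurable
          apply Measurable.mul (f := fun p : E3 × E3 => Fθ p.1)
            (g := fun p => G (p.1 - p.2) * N p.2)
          · exact hFmeas.comp measurable_fst
          · exact Measurable.mul
              (by fun_prop : Measurable fun p : E3 × E3 =>
                ENNReal.ofReal (‖p.1 - p.2‖ ^ (-(2:ℝ))))
              (hNmeas.comp measurable_snd)
      _ = ENNReal.ofReal c * ∫⁻ η : E3, (∫⁻ ω, Fθ ω * G (ω - η)) * N η := by
          congr 1
          refine lintegral_congr fun η => ?_
          simp_rw [← mul_assoc]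
          rw [lintegral_mul_const _ ?_]
          exact hFmeas.mul
            ((by fun_prop : Measurable fun ω : E3 =>
              ENNReal.ofReal (‖ω - η‖ ^ (-(2:ℝ)))))
      _ ≤ ENNReal.ofReal c * ∫⁻ η : E3, (2 * ∫⁻ ω : E3, Fθ ω * G ω) * N η := by
          refine mul_le_mul_right (lintegral_mono fun η => ?_) _
          exact mul_le_mul_left (hsplit η) _
      _ = ENNReal.ofReal c * ((2 * ∫⁻ ω : E3, Fθ ω * G ω) * ∫⁻ η : E3, N η) := by
          rw [lintegral_const_mul _ hNmeas]
      _ = ENNReal.ofReal κ * ∫⁻ η : E3, N η := by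
          rw [hJval, ← mul_assoc]
          congr 1
          rw [show (2 : ℝ≥0∞) = ENNReal.ofReal 2 by simp]
          rw [← ENNReal.ofReal_mul (by positivity), ← ENNReal.ofReal_mul (by norm_num),
            ← ENNReal.ofReal_mul hc]
          congr 1
          have hπ : Real.sqrt π * Real.sqrt π = π := Real.mul_self_sqrt pi_pos.le
          have hsne : Real.sqrt π ≠ 0 := (Real.sqrt_pos.mpr pi_pos).ne'
          rw [hκdef, hcdef, show ϑ/2 - 1/2 = (ϑ - 1)/2 by ring]
          field_simp
          linear_combination 4 * hπ
  -- convert the Bochner integrals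
  have hNint : ∫⁻ η : E3, N η = ∫⁻ η : E3, (‖f η‖₊ : ℝ≥0∞) :=
    (lintegral_congr_ae hNae).symm
  have hLHS : ∫ ω : E3, (1 + ‖ω‖ ^ 2) ^ (-ϑ / 2) * ‖Kop f ω‖
      = (∫⁻ ω : E3, Fθ ω * (‖Kop f ω‖₊ : ℝ≥0∞)).toReal := by
    rw [integral_eq_lintegral_of_nonneg_ae ?_ ?_]
    · congr 1
      refine lintegral_congr fun ω => ?_
      rw [ENNReal.ofReal_mul (by positivity), ofReal_norm_eq_enorm, enorm_eq_nnnorm]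
    · exact Filter.Eventually.of_forall fun ω => by positivity
    · have : (fun ω : E3 => (1 + ‖ω‖ ^ 2) ^ (-ϑ / 2) * ‖Kop f ω‖)
          = fun ω : E3 => (1 + ‖ω‖ ^ 2) ^ (-ϑ / 2) * ‖Kop f' ω‖ := by
        funext ω; rw [hKeq]
      rw [this]
      exact ((by fun_prop : Measurable fun ω : E3 => (1 + ‖ω‖ ^ 2) ^ (-ϑ / 2)).mul
        hKmeas.norm).aestronglyMeasurable
  rw [hLHS]
  refine ENNReal.toReal_le_of_le_ofReal (by positivity) ?_
  rw [ENNReal.ofReal_mul hκpos.le, ofReal_integral_norm_eq_lintegral_enorm hf]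
  simp only [enorm_eq_nnnorm]
  rw [← hNint]
  exact hchain
end

section
/- For 1 < ϑ ≤ 2, κ(ϑ) = 2Γ((ϑ-1)/2)/(√π Γ(ϑ/2)) ≤ 2/(ϑ-1). -/
open Real

theorem stmt11 (ϑ : ℝ) (h1 : 1 < ϑ) (h2 : ϑ ≤ 2) :
    2 * Real.Gamma ((ϑ - 1) / 2) / (Real.sqrt Real.pi * Real.Gamma (ϑ / 2))
      ≤ 2 / (ϑ - 1) := by
  set x : ℝ := ϑ / 2 with hxdef
  have hx1 : (1:ℝ)/2 < x := by unfold x; linarith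
  have hx2 : x ≤ 1 := by unfold x; linarith
  have hxpos : 0 < x := by linarith
  have hGx : 0 < Real.Gamma x := Real.Gamma_pos_of_pos hxpos
  have hGxh : 0 < Real.Gamma (x + 1/2) := Real.Gamma_pos_of_pos (by linarith)
  have hGxm : 0 < Real.Gamma (x - 1/2) := Real.Gamma_pos_of_pos (by linarith)
  have hrec : Real.Gamma (x + 1/2) = (x - 1/2) * Real.Gamma (x - 1/2) := by
    have := Real.Gamma_add_one (s := x - 1/2) (by linarith : (0:ℝ) < x - 1/2).ne'
    convert this using 2 <;> ring
  have hG32 : Real.Gamma (3/2 : ℝ) = Real.sqrt Real.pi / 2 := by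
    have := Real.Gamma_add_one (s := (1/2 : ℝ)) (by norm_num)
    rw [Real.Gamma_one_half_eq] at this
    norm_num at this ⊢
    linarith
  -- key log-convexity step
  have hconv := Real.convexOn_log_Gamma
  set g : ℝ → ℝ := Real.log ∘ Real.Gamma with hg
  have hmem : ∀ y : ℝ, 0 < y → y ∈ Set.Ioi (0:ℝ) := fun y hy => hy
  have s1 : slope g x (x + 1/2) ≤ slope g x (3/2) := by
    refine (hconv.slope_mono (hmem x hxpos)) ⟨hmem _ (by linarith), ?_⟩
      ⟨hmem _ (by norm_num), ?_⟩ (by linarith)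
    · simp only [Set.mem_singleton_iff]; intro h; linarith
    · simp only [Set.mem_singleton_iff]; intro h; linarith
  have s2 : slope g (3/2) x ≤ slope g (3/2) 1 := by
    refine (hconv.slope_mono (hmem (3/2) (by norm_num))) ⟨hmem _ hxpos, ?_⟩
      ⟨hmem _ (by norm_num), ?_⟩ hx2
    · simp only [Set.mem_singleton_iff]; intro h; linarith
    · simp only [Set.mem_singleton_iff]; intro h; norm_num at h
  rw [slope_comm] at s2
  rw [slope_comm g (3/2) 1] at s2
  have hs : slope g x (x + 1/2) ≤ slope g 1 (3/2) := le_trans s1 s2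
  rw [slope_def_field, slope_def_field] at hs
  have hlog : g (x + 1/2) - g x ≤ g (3/2) - g 1 := by
    have h2' : (3/2 : ℝ) - 1 = 1/2 := by norm_num
    have h1' : x + 1/2 - x = 1/2 := by ring
    rw [h1', h2'] at hs
    have := (div_le_div_iff_of_pos_right (c := (1/2:ℝ)) (by norm_num)).mp hs
    linarith [hs]
  have key : Real.Gamma (x + 1/2) ≤ Real.sqrt Real.pi / 2 * Real.Gamma x := by
    have hg32 : g (3/2) = Real.log (Real.sqrt Real.pi / 2) := by
      simp [hg, Function.comp, hG32]
    have hg1 : g 1 = 0 := by simp [hg, Function.comp, Real.Gamma_one]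
    have : Real.log (Real.Gamma (x + 1/2)) ≤
        Real.log (Real.sqrt Real.pi / 2 * Real.Gamma x) := by
      rw [Real.log_mul (by positivity) (ne_of_gt hGx)]
      have := hlog
      simp only [hg, Function.comp] at this
      rw [hg32, hg1] at hlog
      simp only [hg, Function.comp_apply] at hlog
      linarith
    exact (Real.log_le_log_iff hGxh (by positivity)).mp this
  -- finish
  have hpi : 0 < Real.sqrt Real.pi := Real.sqrt_pos.mpr Real.pi_pos
  have hden : 0 < Real.sqrt Real.pi * Real.Gamma x := by positivity
  have hxm : (ϑ - 1)/2 = x - 1/2 := by unfold x; ring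
  rw [hxm, div_le_div_iff₀ hden (by linarith)]
  have hth : ϑ - 1 = 2 * (x - 1/2) := by unfold x; ring
  rw [hrec] at key
  rw [hth]
  nlinarith [key, hGxm, hx1]
end

section
/- The function ϑ ↦ Γ((ϑ+1)/2)/Γ(ϑ/2) is strictly increasing on (0, ∞). -/
open Real

private lemma fpos {x : ℝ} (hx : 0 < x) :
    0 < Real.Gamma ((x + 1) / 2) / Real.Gamma (x / 2) :=
  div_pos (Real.Gamma_pos_of_pos (by linarith)) (Real.Gamma_pos_of_pos (by linarith))

private lemma fe {x : ℝ} (hx : 0 < x) :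
    (Real.Gamma ((x + 1) / 2) / Real.Gamma (x / 2)) *
      (Real.Gamma ((x + 1 + 1) / 2) / Real.Gamma ((x + 1) / 2)) = x / 2 := by
  have h1 : Real.Gamma ((x + 1) / 2) ≠ 0 := (Real.Gamma_pos_of_pos (by linarith)).ne'
  have h2 : Real.Gamma (x / 2) ≠ 0 := (Real.Gamma_pos_of_pos (by linarith)).ne'
  have h3 : (x + 1 + 1) / 2 = x / 2 + 1 := by ring
  rw [h3, Real.Gamma_add_one (by positivity)]
  field_simp

/-- increment of a convex function over a fixed step is monotone -/
private lemma incr_mono {g : ℝ → ℝ} (hg : ConvexOn ℝ (Set.Ioi (0:ℝ)) g)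
    {u v h : ℝ} (hu : 0 < u) (huv : u < v) (hh : 0 < h) :
    g (u + h) - g u ≤ g (v + h) - g v := by
  have hv : 0 < v := hu.trans huv
  have m1 : (g (u + h) - g u) / (u + h - u) ≤ (g (v + h) - g u) / (v + h - u) :=
    hg.secant_mono (Set.mem_Ioi.2 hu) (Set.mem_Ioi.2 (by linarith))
      (Set.mem_Ioi.2 (by linarith)) (by linarith) (by linarith) (by linarith)
  have m2 : (g u - g (v + h)) / (u - (v + h)) ≤ (g v - g (v + h)) / (v - (v + h)) :=
    hg.secant_mono (Set.mem_Ioi.2 (by linarith : (0:ℝ) < v + h)) (Set.mem_Ioi.2 hu)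
      (Set.mem_Ioi.2 hv) (by linarith) (by linarith) (by linarith)
  have e1 : (g u - g (v + h)) / (u - (v + h)) = (g (v + h) - g u) / (v + h - u) := by
    rw [← neg_div_neg_eq]; ring_nf
  have e2 : (g v - g (v + h)) / (v - (v + h)) = (g (v + h) - g v) / h := by
    rw [← neg_div_neg_eq]; ring_nf
  rw [e1, e2] at m2
  have hstep : (u + h - u) = h := by ring
  rw [hstep] at m1
  have : (g (u + h) - g u) / h ≤ (g (v + h) - g v) / h := le_trans m1 m2
  calc g (u + h) - g u = (g (u + h) - g u) / h * h := by field_simp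
    _ ≤ (g (v + h) - g v) / h * h := by gcongr
    _ = g (v + h) - g v := by field_simp

private lemma fmono : MonotoneOn
    (fun ϑ : ℝ => Real.Gamma ((ϑ + 1) / 2) / Real.Gamma (ϑ / 2)) (Set.Ioi (0 : ℝ)) := by
  intro a ha b hb hab
  rcases eq_or_lt_of_le hab with rfl | hab
  · exact le_rfl
  simp only
  rw [Set.mem_Ioi] at ha hb
  have key : (Real.log ∘ Real.Gamma) (a / 2 + 1 / 2) - (Real.log ∘ Real.Gamma) (a / 2)
      ≤ (Real.log ∘ Real.Gamma) (b / 2 + 1 / 2) - (Real.log ∘ Real.Gamma) (b / 2) :=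
    incr_mono Real.convexOn_log_Gamma (by linarith) (by linarith) (by norm_num)
  simp only [Function.comp_apply] at key
  have ea : a / 2 + 1 / 2 = (a + 1) / 2 := by ring
  have eb : b / 2 + 1 / 2 = (b + 1) / 2 := by ring
  rw [ea, eb] at key
  have h1 : (0:ℝ) < Real.Gamma ((a + 1) / 2) := Real.Gamma_pos_of_pos (by linarith)
  have h2 : (0:ℝ) < Real.Gamma (a / 2) := Real.Gamma_pos_of_pos (by linarith)
  have h3 : (0:ℝ) < Real.Gamma ((b + 1) / 2) := Real.Gamma_pos_of_pos (by linarith)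
  have h4 : (0:ℝ) < Real.Gamma (b / 2) := Real.Gamma_pos_of_pos (by linarith)
  rw [← Real.log_div h1.ne' h2.ne', ← Real.log_div h3.ne' h4.ne'] at key
  exact (Real.log_le_log_iff (div_pos h1 h2) (div_pos h3 h4)).1 key

theorem stmt12 :
    StrictMonoOn (fun ϑ : ℝ => Real.Gamma ((ϑ + 1) / 2) / Real.Gamma (ϑ / 2))
      (Set.Ioi (0 : ℝ)) := by
  intro a ha b hb hab
  rw [Set.mem_Ioi] at ha hb
  set f : ℝ → ℝ := fun ϑ => Real.Gamma ((ϑ + 1) / 2) / Real.Gamma (ϑ / 2) with hf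
  by_contra hcon
  push_neg at hcon
  have heq : f a = f b := le_antisymm (fmono (Set.mem_Ioi.2 ha) (Set.mem_Ioi.2 hb) hab.le) hcon
  have Fa : f a * f (a + 1) = a / 2 := fe ha
  have Fb : f b * f (b + 1) = b / 2 := fe hb
  have Fa2 : f (a + 1) * f (a + 1 + 1) = (a + 1) / 2 := fe (by linarith)
  have Fb2 : f (b + 1) * f (b + 1 + 1) = (b + 1) / 2 := fe (by linarith)
  have p0 : 0 < f a := fpos ha
  have p1 : 0 < f (a + 1) := fpos (by linarith)
  have p2 : 0 < f (b + 1) := fpos (by linarith)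
  have mono2 : f (a + 1 + 1) ≤ f (b + 1 + 1) :=
    fmono (Set.mem_Ioi.2 (by linarith)) (Set.mem_Ioi.2 (by linarith)) (by linarith)
  have e1 : f (a + 1) = a / 2 / f a := by
    rw [eq_div_iff p0.ne', mul_comm]; exact Fa
  have e2 : f (b + 1) = b / 2 / f a := by
    rw [eq_div_iff p0.ne', mul_comm, heq]; exact Fb
  have e3 : f (a + 1 + 1) = (a + 1) / 2 / f (a + 1) := by
    rw [eq_div_iff p1.ne', mul_comm]; exact Fa2
  have e4 : f (b + 1 + 1) = (b + 1) / 2 / f (b + 1) := by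
    rw [eq_div_iff p2.ne', mul_comm]; exact Fb2
  rw [e3, e4, e1, e2] at mono2
  rw [div_le_div_iff₀ (by rw [e1] at p1; exact p1) (by rw [e2] at p2; exact p2)] at mono2
  field_simp [p0.ne'] at mono2
  nlinarith [mono2, p0, hab, mul_pos (sub_pos.2 hab) p0]
end

section
/- If u : ℝⁿ → ℂ lies in H¹(ℝⁿ) with n ≥ 3, then ∫ ‖x‖^(-2) |u(x)|² dx ≤ (2/(n-2))² ∫ ‖∇u(x)‖² dx; in particular for n = 3 the constant is 4. -/
open MeasureTheory Set Metric ENNReal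

variable {E : Type*} [NormedAddCommGroup E] [NormedSpace ℝ E] [MeasurableSpace E] [BorelSpace E]
  [FiniteDimensional ℝ E] [Nontrivial E]

lemma polar_lintegral (μ : Measure E) [μ.IsAddHaarMeasure] (f : E → ℝ≥0∞) (hf : Measurable f) :
    ∫⁻ x, f x ∂μ = ∫⁻ ω : sphere (0:E) 1, ∫⁻ r in Ioi (0:ℝ),
      ENNReal.ofReal (r ^ (Module.finrank ℝ E - 1)) * f (r • (ω : E)) ∂volume ∂μ.toSphere := by
  have h0 : ∫⁻ x, f x ∂μ = ∫⁻ x in ({0}ᶜ : Set E), f x ∂μ := by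
    rw [← setLIntegral_univ f, setLIntegral_congr ((ae_eq_univ (s := ({0}ᶜ : Set E))).2 (by rw [compl_compl]; exact measure_singleton 0)).symm]
  rw [h0, ← lintegral_subtype_comap (measurableSet_singleton (0:E)).compl]
  have hmp := (Measure.measurePreserving_homeomorphUnitSphereProd μ)
  have key : ∫⁻ x : ({0}ᶜ : Set E), f x ∂(μ.comap (↑))
      = ∫⁻ p : sphere (0:E) 1 × Ioi (0:ℝ), f ((p.2 : ℝ) • (p.1 : E))
          ∂(μ.toSphere.prod (Measure.volumeIoiPow (Module.finrank ℝ E - 1))) := by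
    rw [← hmp.lintegral_comp (f := fun p : sphere (0:E) 1 × Ioi (0:ℝ) => f ((p.2 : ℝ) • (p.1 : E)))
      (by fun_prop)]
    refine lintegral_congr fun x => ?_
    congr 1
    simp [smul_smul, mul_inv_cancel₀ (norm_ne_zero_iff.2 x.2)]
  rw [key, lintegral_prod _ (by fun_prop)]
  refine lintegral_congr fun ω => ?_
  rw [Measure.volumeIoiPow, lintegral_withDensity_eq_lintegral_mul _ (by fun_prop) (by fun_prop)]
  have : (fun a : Ioi (0:ℝ) => ((fun r : Ioi (0:ℝ) => ENNReal.ofReal ((r:ℝ) ^ (Module.finrank ℝ E - 1))) * fun y : Ioi (0:ℝ) => f ((y:ℝ) • (ω : E))) a)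
      = fun a : Ioi (0:ℝ) => (fun r : ℝ => ENNReal.ofReal (r ^ (Module.finrank ℝ E - 1)) * f (r • (ω : E))) (a : ℝ) := rfl
  rw [this]; exact lintegral_subtype_comap (μ := volume) (measurableSet_Ioi : MeasurableSet (Ioi (0:ℝ))) (fun r : ℝ => ENNReal.ofReal (r ^ (Module.finrank ℝ E - 1)) * f (r • (ω : E)))

lemma polar_nn (μ : Measure E) [μ.IsAddHaarMeasure] (v : E → ℝ) (hv : Measurable v) :
    ∫⁻ x, ENNReal.ofReal (v x) ∂μ = ∫⁻ ω : sphere (0:E) 1, ∫⁻ r in Ioi (0:ℝ),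
      ENNReal.ofReal (r ^ (Module.finrank ℝ E - 1) * v (r • (ω : E))) ∂volume ∂μ.toSphere := by
  rw [polar_lintegral μ _ hv.ennreal_ofReal]
  refine lintegral_congr fun ω => ?_
  refine setLIntegral_congr_fun measurableSet_Ioi (fun r hr => ?_)
  rw [← ENNReal.ofReal_mul (pow_nonneg (le_of_lt hr) _)]
open MeasureTheory Set ENNReal

-- pointwise AM-GM: 2 r^m a b ≤ (m/2) r^(m-1) a² + (2/m) r^(m+1) b²
lemma amgm_pt (m : ℕ) (hm : 1 ≤ m) {r a b : ℝ} (hr : 0 ≤ r) (ha : 0 ≤ a) (hb : 0 ≤ b) :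
    2 * r ^ m * (a * b) ≤ ((m:ℝ)/2) * r ^ (m-1) * a^2 + (2/(m:ℝ)) * r ^ (m+1) * b^2 := by
  have hm0 : (0:ℝ) < m := by exact_mod_cast hm.trans_lt' (by norm_num)
  set u := Real.sqrt ((m:ℝ)/2) * (Real.sqrt (r ^ (m-1)) * a) with hu
  set v := Real.sqrt (2/(m:ℝ)) * (Real.sqrt (r ^ (m+1)) * b) with hv
  have h2 := two_mul_le_add_sq u v
  have hsq1 : Real.sqrt ((m:ℝ)/2) ^ 2 = (m:ℝ)/2 := Real.sq_sqrt (by positivity)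
  have hsq2 : Real.sqrt (2/(m:ℝ)) ^ 2 = 2/(m:ℝ) := Real.sq_sqrt (by positivity)
  have hsq3 : Real.sqrt (r ^ (m-1)) ^ 2 = r ^ (m-1) := Real.sq_sqrt (by positivity)
  have hsq4 : Real.sqrt (r ^ (m+1)) ^ 2 = r ^ (m+1) := Real.sq_sqrt (by positivity)
  have hms : Real.sqrt ((m:ℝ)/2) * Real.sqrt (2/(m:ℝ)) = 1 := by
    rw [← Real.sqrt_mul (by positivity)]
    rw [div_mul_div_comm]
    rw [mul_comm]
    rw [div_self (by positivity)]
    exact Real.sqrt_one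
  have hrs : Real.sqrt (r ^ (m-1)) * Real.sqrt (r ^ (m+1)) = r ^ m := by
    rw [← Real.sqrt_mul (by positivity), ← pow_add]
    have : m - 1 + (m + 1) = 2 * m := by omega
    rw [this, mul_comm 2 m, pow_mul]
    exact Real.sqrt_sq (by positivity)
  have huv : u * v = r ^ m * (a * b) := by
    rw [hu, hv]
    calc √(↑m / 2) * (√(r ^ (m - 1)) * a) * (√(2 / ↑m) * (√(r ^ (m + 1)) * b))
        = (√(↑m / 2) * √(2 / ↑m)) * ((√(r ^ (m - 1)) * √(r ^ (m + 1))) * (a * b)) := by ring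
    _ = r ^ m * (a * b) := by rw [hms, hrs]; ring
  have hu2 : u ^ 2 = ((m:ℝ)/2) * r ^ (m-1) * a^2 := by rw [hu, mul_pow, mul_pow, hsq1, hsq3]; ring
  have hv2 : v ^ 2 = (2/(m:ℝ)) * r ^ (m+1) * b^2 := by rw [hv, mul_pow, mul_pow, hsq2, hsq4]; ring
  calc 2 * r ^ m * (a*b) = 2 * (u * v) := by rw [huv]; ring
  _ ≤ u^2 + v^2 := by have := two_mul_le_add_sq u v; linarith
  _ = _ := by rw [hu2, hv2]

-- derivative of ‖g r‖²
lemma hasDerivAt_norm_sq {g : ℝ → ℂ} (hg : Differentiable ℝ g) (r : ℝ) :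
    HasDerivAt (fun t => ‖g t‖ ^ 2)
      (2 * ((g r).re * (deriv g r).re + (g r).im * (deriv g r).im)) r := by
  have hgr : HasDerivAt g (deriv g r) r := (hg r).hasDerivAt
  have hre : HasDerivAt (fun t => (g t).re) ((deriv g r).re) r :=
    (Complex.reCLM.hasFDerivAt.comp_hasDerivAt r hgr)
  have him : HasDerivAt (fun t => (g t).im) ((deriv g r).im) r :=
    (Complex.imCLM.hasFDerivAt.comp_hasDerivAt r hgr)
  have h : HasDerivAt (fun t => (g t).re * (g t).re + (g t).im * (g t).im)
      (2 * ((g r).re * (deriv g r).re + (g r).im * (deriv g r).im)) r := by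
    have := (hre.mul hre).add (him.mul him)
    exact this.congr_deriv (by ring)
  have heq : (fun t => ‖g t‖ ^ 2) = fun t => (g t).re * (g t).re + (g t).im * (g t).im := by
    funext t
    rw [← Complex.normSq_apply, ← Complex.sq_norm]
  rw [heq]
  exact h

lemma abs_phi (z w : ℂ) : |z.re * w.re + z.im * w.im| ≤ ‖z‖ * ‖w‖ := by
  have h : z.re * w.re + z.im * w.im = ((starRingEnd ℂ) z * w).re := by
    simp [Complex.mul_re]
  rw [h]
  refine (Complex.abs_re_le_norm _).trans ?_
  rw [norm_mul, Complex.norm_conj]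

lemma hardy_interval (m : ℕ) (hm : 1 ≤ m) (g : ℝ → ℂ) (hg : Differentiable ℝ g)
    {J : ℝ≥0∞} (hJdef : J = ∫⁻ r in Ioi (0:ℝ), ENNReal.ofReal (r ^ (m+1) * ‖deriv g r‖^2))
    (hJ : J ≠ ⊤) {ε R : ℝ} (hε : 0 < ε) (hεR : ε ≤ R) :
    ((m:ℝ)/2) * ∫ r in ε..R, r^(m-1) * ‖g r‖^2
      ≤ R^m * ‖g R‖^2 + (2/(m:ℝ)) * J.toReal := by
  have hm0 : (0:ℝ) < m := by exact_mod_cast Nat.lt_of_lt_of_le Nat.zero_lt_one hm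
  set φ : ℝ → ℝ := fun r => (g r).re * (deriv g r).re + (g r).im * (deriv g r).im with hφ
  set A : ℝ → ℝ := fun r => r^(m-1) * ‖g r‖^2 with hA
  set B : ℝ → ℝ := fun r => r^m * (2 * φ r) with hB
  set C : ℝ → ℝ := fun r => r^(m+1) * ‖deriv g r‖^2 with hC
  set D : ℝ → ℝ := fun r => ((m:ℝ)/2) * A r + (2/(m:ℝ)) * C r with hD
  have hgc : Continuous g := hg.continuous
  have hmeas_deriv : Measurable (deriv g) := measurable_deriv g
  have hAcont : Continuous A := by fun_prop
  have hφmeas : Measurable φ := by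
    refine Measurable.add (Measurable.mul ?_ ?_) (Measurable.mul ?_ ?_)
    · exact (Complex.measurable_re.comp hgc.measurable)
    · exact (Complex.measurable_re.comp hmeas_deriv)
    · exact (Complex.measurable_im.comp hgc.measurable)
    · exact (Complex.measurable_im.comp hmeas_deriv)
  have hCmeas : Measurable C := by
    exact (measurable_id.pow_const (m+1)).mul ((hmeas_deriv.norm).pow_const 2)
  have hCnn : ∀ r ∈ Ioc ε R, 0 ≤ C r := fun r hr =>
    mul_nonneg (pow_nonneg (hε.trans hr.1).le _) (sq_nonneg _)
  have hC_int : IntegrableOn C (Ioc ε R) := by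
    refine ⟨hCmeas.aestronglyMeasurable, ?_⟩
    rw [hasFiniteIntegral_iff_ofReal ((ae_restrict_mem measurableSet_Ioc).mono hCnn)]
    calc ∫⁻ r in Ioc ε R, ENNReal.ofReal (C r) ≤ J := by
          rw [hJdef]
          exact lintegral_mono_set (fun r hr => lt_of_lt_of_le hε hr.1.le)
    _ < ⊤ := hJ.lt_top
  have hA_int : IntegrableOn A (Ioc ε R) := hAcont.integrableOn_Ioc
  have hD_int : IntegrableOn D (Ioc ε R) :=
    (hA_int.const_mul _).add (hC_int.const_mul _)
  have hBD : ∀ r, 0 < r → |B r| ≤ D r := by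
    intro r hr
    have h1 : |B r| ≤ 2 * r^m * (‖g r‖ * ‖deriv g r‖) := by
      rw [hB]
      have : |r^m * (2 * φ r)| = 2 * r^m * |φ r| := by
        rw [abs_mul, abs_mul, abs_of_nonneg (by positivity : (0:ℝ) ≤ r^m),
          abs_of_nonneg (by norm_num : (0:ℝ) ≤ (2:ℝ))]
        ring
      rw [this]
      have := abs_phi (g r) (deriv g r)
      nlinarith [pow_nonneg hr.le m]
    refine h1.trans ?_
    have := amgm_pt m hm hr.le (norm_nonneg (g r)) (norm_nonneg (deriv g r))
    calc 2 * r^m * (‖g r‖ * ‖deriv g r‖)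
        ≤ ((m:ℝ)/2) * r ^ (m-1) * ‖g r‖^2 + (2/(m:ℝ)) * r ^ (m+1) * ‖deriv g r‖^2 := this
    _ = D r := by rw [hD, hA, hC]; ring
  have hB_int : IntegrableOn B (Ioc ε R) := by
    refine Integrable.mono' hD_int ?_ ?_
    · exact ((measurable_id.pow_const m).mul (hφmeas.const_mul 2)).aestronglyMeasurable
    · filter_upwards [ae_restrict_mem measurableSet_Ioc] with r hr
      exact hBD r (lt_of_lt_of_le hε hr.1.le)
  have hFd : ∀ r : ℝ, HasDerivAt (fun t => t^m * ‖g t‖^2)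
      ((m:ℝ) * r^(m-1) * ‖g r‖^2 + r^m * (2 * φ r)) r := by
    intro r
    have := (hasDerivAt_pow m r).mul (hasDerivAt_norm_sq hg r)
    simpa [hφ, Pi.mul_def] using this
  have hA'B_int : IntervalIntegrable (fun r => (m:ℝ) * A r + B r) volume ε R := by
    rw [intervalIntegrable_iff_integrableOn_Ioc_of_le hεR]
    exact (hA_int.const_mul _).add hB_int
  have hFTC : ∫ r in ε..R, ((m:ℝ) * A r + B r) = R^m * ‖g R‖^2 - ε^m * ‖g ε‖^2 := by
    refine intervalIntegral.integral_eq_sub_of_hasDerivAt (f := fun t => t^m * ‖g t‖^2) (fun r _ => ?_) hA'B_int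
    have := hFd r
    have harr : (m:ℝ) * A r + B r = (m:ℝ) * r^(m-1) * ‖g r‖^2 + r^m * (2 * φ r) := by
      rw [hA, hB]; ring
    rw [harr]
    exact this
  have hAII : IntervalIntegrable A volume ε R :=
    (intervalIntegrable_iff_integrableOn_Ioc_of_le hεR).2 hA_int
  have hBII : IntervalIntegrable B volume ε R :=
    (intervalIntegrable_iff_integrableOn_Ioc_of_le hεR).2 hB_int
  have hsplit : ∫ r in ε..R, ((m:ℝ) * A r + B r)
      = (m:ℝ) * (∫ r in ε..R, A r) + ∫ r in ε..R, B r := by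
    rw [intervalIntegral.integral_add (hAII.const_mul _) hBII,
      intervalIntegral.integral_const_mul]
  have habsB : |∫ r in ε..R, B r| ≤ ∫ r in ε..R, D r := by
    refine (intervalIntegral.abs_integral_le_integral_abs hεR).trans ?_
    refine intervalIntegral.integral_mono_on hεR hBII.abs
      ((intervalIntegrable_iff_integrableOn_Ioc_of_le hεR).2 hD_int) fun r hr => ?_
    exact hBD r (lt_of_lt_of_le hε hr.1)
  have hCII : IntervalIntegrable C volume ε R :=
    (intervalIntegrable_iff_integrableOn_Ioc_of_le hεR).2 hC_int
  have hintD : ∫ r in ε..R, D r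
      = ((m:ℝ)/2) * (∫ r in ε..R, A r) + (2/(m:ℝ)) * ∫ r in ε..R, C r := by
    rw [hD]
    rw [intervalIntegral.integral_add (hAII.const_mul _) (hCII.const_mul _),
      intervalIntegral.integral_const_mul, intervalIntegral.integral_const_mul]
  have hCJ : ∫ r in ε..R, C r ≤ J.toReal := by
    rw [intervalIntegral.integral_of_le hεR]
    have h1 := ofReal_integral_eq_lintegral_ofReal hC_int
      ((ae_restrict_mem measurableSet_Ioc).mono hCnn)
    have h2 : ∫⁻ r in Ioc ε R, ENNReal.ofReal (C r) ≤ J := by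
      rw [hJdef]
      exact lintegral_mono_set (fun r hr => lt_of_lt_of_le hε hr.1.le)
    have h3 : 0 ≤ ∫ r in Ioc ε R, C r :=
      setIntegral_nonneg measurableSet_Ioc hCnn
    have := ENNReal.toReal_mono hJ (h1 ▸ h2)
    rwa [ENNReal.toReal_ofReal h3] at this
  have hFε : 0 ≤ ε^m * ‖g ε‖^2 := by positivity
  have hIA : ∫ r in ε..R, r^(m-1) * ‖g r‖^2 = ∫ r in ε..R, A r := rfl
  rw [hIA]
  have key : (m:ℝ) * (∫ r in ε..R, A r) + ∫ r in ε..R, B r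
      = R^m * ‖g R‖^2 - ε^m * ‖g ε‖^2 := by rw [← hsplit, hFTC]
  nlinarith [habsB, hintD, hCJ, abs_nonneg (∫ r in ε..R, B r),
    abs_le.1 habsB, mul_le_mul_of_nonneg_left hCJ (by positivity : (0:ℝ) ≤ 2/(m:ℝ))]

lemma exists_big (m : ℕ) (g : ℝ → ℂ)
    (hK : ∫⁻ r in Ioi (0:ℝ), ENNReal.ofReal (r ^ (m+1) * ‖g r‖^2) ≠ ⊤)
    {c : ℝ} (hc : 0 < c) (M : ℝ) : ∃ R, M < R ∧ R^m * ‖g R‖^2 < c := by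
  by_contra h
  push_neg at h
  set M' := max M 1 with hM'
  have hM'pos : (0:ℝ) < M' := lt_of_lt_of_le one_pos (le_max_right _ _)
  have hbound : ∀ r ∈ Ioi M', ENNReal.ofReal (c * M') ≤ ENNReal.ofReal (r ^ (m+1) * ‖g r‖^2) := by
    intro r hr
    rw [mem_Ioi] at hr
    have hrM : M < r := lt_of_le_of_lt (le_max_left _ _) hr
    have hr0 : (0:ℝ) < r := hM'pos.trans hr
    refine ENNReal.ofReal_le_ofReal ?_
    have h1 : c ≤ r^m * ‖g r‖^2 := h r hrM
    calc c * M' ≤ (r^m * ‖g r‖^2) * r := by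
          apply mul_le_mul h1 hr.le hM'pos.le
          positivity
    _ = r^(m+1) * ‖g r‖^2 := by ring
  have : (⊤ : ℝ≥0∞) ≤ ∫⁻ r in Ioi (0:ℝ), ENNReal.ofReal (r ^ (m+1) * ‖g r‖^2) := by
    calc (⊤:ℝ≥0∞) = ∫⁻ _ in Ioi M', ENNReal.ofReal (c * M') := by
          rw [setLIntegral_const, Real.volume_Ioi, ENNReal.mul_top]
          simp [ENNReal.ofReal_eq_zero, not_le, mul_pos hc hM'pos]
    _ ≤ ∫⁻ r in Ioi M', ENNReal.ofReal (r ^ (m+1) * ‖g r‖^2) := by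
          refine lintegral_mono_ae ?_
          filter_upwards [ae_restrict_mem measurableSet_Ioi] with r hr
          exact hbound r hr
    _ ≤ _ := lintegral_mono_set (fun r hr => hM'pos.trans hr)
  exact hK (top_le_iff.mp this)

lemma hardy_ray (m : ℕ) (hm : 1 ≤ m) (g : ℝ → ℂ) (hg : Differentiable ℝ g)
    (hK : ∫⁻ r in Ioi (0:ℝ), ENNReal.ofReal (r ^ (m+1) * ‖g r‖^2) ≠ ⊤) :
    ∫⁻ r in Ioi (0:ℝ), ENNReal.ofReal (r ^ (m-1) * ‖g r‖^2)
      ≤ ENNReal.ofReal ((2/(m:ℝ))^2) *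
        ∫⁻ r in Ioi (0:ℝ), ENNReal.ofReal (r ^ (m+1) * ‖deriv g r‖^2) := by
  have hm0 : (0:ℝ) < m := by exact_mod_cast Nat.lt_of_lt_of_le Nat.zero_lt_one hm
  set J := ∫⁻ r in Ioi (0:ℝ), ENNReal.ofReal (r ^ (m+1) * ‖deriv g r‖^2) with hJdef
  by_cases hJ : J = ⊤
  · rw [hJ, ENNReal.mul_top (by simp only [ne_eq, ENNReal.ofReal_eq_zero, not_le]; positivity)]
    exact le_top
  have hcover : Ioi (0:ℝ) = ⋃ k : ℕ, Ioc (1/((k:ℝ)+1)) ((k:ℝ)+1) := by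
    ext x
    simp only [mem_Ioi, mem_iUnion, mem_Ioc]
    constructor
    · intro hx
      obtain ⟨k, hk⟩ := exists_nat_gt (max (1/x) x)
      refine ⟨k, ?_, ?_⟩
      · rw [div_lt_iff₀ (by positivity)]
        have h1 : 1/x < (k:ℝ) + 1 := lt_of_le_of_lt (le_max_left _ _) (hk.trans (by linarith))
        rw [div_lt_iff₀ hx] at h1
        linarith [mul_comm x ((k:ℝ)+1)]
      · exact le_of_lt (lt_of_le_of_lt (le_max_right _ _) (hk.trans (by linarith)))
    · rintro ⟨k, h1, _⟩
      exact lt_trans (by positivity) h1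
  have hdir : Directed (· ⊆ ·) (fun k : ℕ => Ioc (1/((k:ℝ)+1)) ((k:ℝ)+1)) := by
    refine directed_of_isDirected_le fun i j hij => Ioc_subset_Ioc ?_ ?_
    · apply one_div_le_one_div_of_le (by positivity)
      exact_mod_cast by exact_mod_cast add_le_add_left (Nat.cast_le.2 hij) 1
    · exact add_le_add_left (Nat.cast_le.2 hij) 1
  rw [hcover, setLIntegral_iUnion_of_directed _ hdir]
  refine ENNReal.le_of_forall_pos_le_add fun η hη hlt => ?_
  refine iSup_le fun k => ?_
  set ε : ℝ := 1/((k:ℝ)+1) with hε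
  have hεpos : 0 < ε := by positivity
  set δ : ℝ := (m:ℝ)/2 * η with hδ
  have hδpos : 0 < δ := by
    refine _root_.mul_pos (by positivity) ?_
    exact_mod_cast hη
  obtain ⟨R, hR1, hR2⟩ := exists_big m g hK hδpos ((k:ℝ)+1)
  have hεR : ε ≤ R := by
    have h1 : ε ≤ 1 := by rw [hε]; rw [div_le_one (by positivity)]; linarith [Nat.cast_nonneg (α := ℝ) k]
    have h2 : (1:ℝ) ≤ (k:ℝ)+1 := by linarith [Nat.cast_nonneg (α := ℝ) k]
    linarith
  have hmono : Ioc ε ((k:ℝ)+1) ⊆ Ioc ε R := Ioc_subset_Ioc le_rfl hR1.le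
  have hAnn : ∀ r ∈ Ioc ε R, 0 ≤ r^(m-1) * ‖g r‖^2 := fun r hr =>
    mul_nonneg (pow_nonneg (hεpos.trans hr.1).le _) (sq_nonneg _)
  have hA_int : IntegrableOn (fun r => r^(m-1) * ‖g r‖^2) (Ioc ε R) :=
    (Continuous.integrableOn_Ioc (by have := hg.continuous; fun_prop))
  calc ∫⁻ r in Ioc ε ((k:ℝ)+1), ENNReal.ofReal (r ^ (m-1) * ‖g r‖^2)
      ≤ ∫⁻ r in Ioc ε R, ENNReal.ofReal (r ^ (m-1) * ‖g r‖^2) := lintegral_mono_set hmono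
  _ = ENNReal.ofReal (∫ r in Ioc ε R, r^(m-1) * ‖g r‖^2) :=
      (ofReal_integral_eq_lintegral_ofReal hA_int
        ((ae_restrict_mem measurableSet_Ioc).mono hAnn)).symm
  _ ≤ ENNReal.ofReal ((2/(m:ℝ))^2 * J.toReal + η) := by
      refine ENNReal.ofReal_le_ofReal ?_
      have hkey := hardy_interval m hm g hg hJdef hJ hεpos hεR
      rw [← intervalIntegral.integral_of_le hεR]
      have h2m : (0:ℝ) < (m:ℝ)/2 := by positivity
      have : R ^ m * ‖g R‖ ^ 2 + 2 / ↑m * J.toReal < δ + 2 / ↑m * J.toReal := by linarith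
      have h3 : ((m:ℝ)/2) * ∫ r in ε..R, r^(m-1) * ‖g r‖^2 ≤ δ + 2 / ↑m * J.toReal :=
        hkey.trans this.le
      rw [← le_div_iff₀' h2m] at h3
      refine h3.trans (le_of_eq ?_)
      rw [hδ]
      field_simp
      ring
  _ ≤ ENNReal.ofReal ((2/(m:ℝ))^2 * J.toReal) + ENNReal.ofReal η :=
      ENNReal.ofReal_add_le
  _ = ENNReal.ofReal ((2/(m:ℝ))^2) * J + η := by
      rw [ENNReal.ofReal_mul (by positivity), ENNReal.ofReal_toReal hJ,
        ENNReal.ofReal_coe_nnreal]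

lemma hardy_aux (n : ℕ) (hn : 3 ≤ n) {E : Type*} [NormedAddCommGroup E] [NormedSpace ℝ E]
    [MeasureSpace E] [BorelSpace E] [FiniteDimensional ℝ E]
    [(volume : Measure E).IsAddHaarMeasure]
    (hfr : Module.finrank ℝ E = n) (u : E → ℂ) (hu : Differentiable ℝ u)
    (hu2 : MemLp u 2 (volume : Measure E)) :
    ∫⁻ x : E, ENNReal.ofReal (‖x‖ ^ (-(2 : ℝ)) * ‖u x‖ ^ 2)
      ≤ ENNReal.ofReal ((2 / ((n : ℝ) - 2)) ^ 2) *
          ∫⁻ x : E, ENNReal.ofReal (‖fderiv ℝ u x‖ ^ 2) := by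
  haveI : Nontrivial E := Module.nontrivial_of_finrank_pos (R := ℝ) (by omega)
  set m : ℕ := n - 2 with hm
  have hm1 : 1 ≤ m := by omega
  have hfr1 : Module.finrank ℝ E - 1 = m + 1 := by omega
  have hmR : (m:ℝ) = (n:ℝ) - 2 := by
    rw [hm, Nat.cast_sub (by omega)]; norm_num
  have humeas : Measurable u := hu.continuous.measurable
  have hder : ∀ (ω : sphere (0:E) 1) (r : ℝ),
      HasDerivAt (fun t : ℝ => u (t • (ω:E))) (fderiv ℝ u (r • (ω:E)) (ω:E)) r := by
    intro ω r
    have h1 : HasDerivAt (fun t : ℝ => t • (ω:E)) ((ω:E)) r := by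
      simpa using (hasDerivAt_id r).smul_const (ω:E)
    exact (hu _).hasFDerivAt.comp_hasDerivAt r h1
  set σ : Measure (sphere (0:E) 1) := (volume : Measure E).toSphere with hσ
  -- LHS polar
  have hL : ∫⁻ x : E, ENNReal.ofReal (‖x‖ ^ (-(2 : ℝ)) * ‖u x‖ ^ 2)
      = ∫⁻ ω : sphere (0:E) 1, ∫⁻ r in Ioi (0:ℝ),
          ENNReal.ofReal (r ^ (m-1) * ‖u (r • (ω:E))‖ ^ 2) ∂volume ∂σ := by
    rw [polar_nn volume _ (by fun_prop)]
    refine lintegral_congr fun ω => ?_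
    refine setLIntegral_congr_fun measurableSet_Ioi (fun r hr => ?_)
    have hr0 : (0:ℝ) < r := hr
    have hnorm : ‖r • (ω:E)‖ = r := by
      rw [norm_smul, mem_sphere_zero_iff_norm.mp ω.2, mul_one, Real.norm_eq_abs, abs_of_pos hr0]
    rw [hfr1, hnorm]
    congr 1
    have hrpow : r ^ (-(2:ℝ)) = (r^(2:ℕ))⁻¹ := by
      rw [Real.rpow_neg hr0.le, ← Real.rpow_natCast r 2]
      norm_num
    rw [hrpow]
    have hsplit : r ^ (m+1) = r^(m-1) * r^(2:ℕ) := by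
      rw [← pow_add]; congr 1; omega
    have h2 : (r^(2:ℕ)) ≠ 0 := by positivity
    calc r ^ (m+1) * ((r^(2:ℕ))⁻¹ * ‖u (r • (ω:E))‖^2)
        = (r^(m-1) * ‖u (r • (ω:E))‖^2) * (r^(2:ℕ) * (r^(2:ℕ))⁻¹) := by rw [hsplit]; ring
    _ = r^(m-1) * ‖u (r • (ω:E))‖^2 := by rw [mul_inv_cancel₀ h2, mul_one]
  -- RHS polar
  have hR : ∫⁻ x : E, ENNReal.ofReal (‖fderiv ℝ u x‖ ^ 2)
      = ∫⁻ ω : sphere (0:E) 1, ∫⁻ r in Ioi (0:ℝ),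
          ENNReal.ofReal (r ^ (m+1) * ‖fderiv ℝ u (r • (ω:E))‖ ^ 2) ∂volume ∂σ := by
    rw [polar_nn volume _ ((measurable_fderiv ℝ u).norm.pow_const 2)]
    simp_rw [hfr1]
    rfl
  -- finiteness
  have hKtot : ∫⁻ x : E, ENNReal.ofReal (‖u x‖ ^ 2) < ⊤ := by
    have h1 := hu2.integrable_norm_rpow two_ne_zero ENNReal.ofNat_ne_top
    have h2 : (fun x => ‖u x‖ ^ (2:ℝ≥0∞).toReal) = fun x => ‖u x‖ ^ 2 := by
      funext x
      rw [ENNReal.toReal_ofNat, ← Real.rpow_natCast ‖u x‖ 2]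
      norm_num
    rw [h2] at h1
    exact h1.lintegral_lt_top
  have hKpolar : ∫⁻ x : E, ENNReal.ofReal (‖u x‖ ^ 2)
      = ∫⁻ ω : sphere (0:E) 1, ∫⁻ r in Ioi (0:ℝ),
          ENNReal.ofReal (r ^ (m+1) * ‖u (r • (ω:E))‖ ^ 2) ∂volume ∂σ := by
    rw [polar_nn volume _ (by fun_prop)]
    simp_rw [hfr1]
    rfl
  have hKmeas : Measurable (fun ω : sphere (0:E) 1 => ∫⁻ r in Ioi (0:ℝ),
      ENNReal.ofReal (r ^ (m+1) * ‖u (r • (ω:E))‖ ^ 2) ∂volume) := by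
    have hc : Continuous (fun p : sphere (0:E) 1 × ℝ => p.2 ^ (m+1) * ‖u (p.2 • (p.1:E))‖ ^ 2) := by
      have := hu.continuous
      fun_prop
    exact Measurable.lintegral_prod_right' (ν := volume.restrict (Ioi (0:ℝ)))
      (f := fun p : sphere (0:E) 1 × ℝ => ENNReal.ofReal (p.2 ^ (m+1) * ‖u (p.2 • (p.1:E))‖ ^ 2))
      hc.measurable.ennreal_ofReal
  have hae : ∀ᵐ ω : sphere (0:E) 1 ∂σ, (∫⁻ r in Ioi (0:ℝ),
      ENNReal.ofReal (r ^ (m+1) * ‖u (r • (ω:E))‖ ^ 2) ∂volume) ≠ ⊤ := by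
    refine (ae_lt_top hKmeas ?_).mono fun ω h => h.ne
    rw [← hKpolar]
    exact hKtot.ne
  -- per-ray Hardy
  have hmain : ∀ᵐ ω : sphere (0:E) 1 ∂σ,
      (∫⁻ r in Ioi (0:ℝ), ENNReal.ofReal (r ^ (m-1) * ‖u (r • (ω:E))‖ ^ 2) ∂volume)
      ≤ ENNReal.ofReal ((2/(m:ℝ))^2) *
        ∫⁻ r in Ioi (0:ℝ), ENNReal.ofReal (r ^ (m+1) * ‖fderiv ℝ u (r • (ω:E))‖ ^ 2) ∂volume := by
    filter_upwards [hae] with ω hKω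
    have hgd : Differentiable ℝ (fun t : ℝ => u (t • (ω:E))) :=
      fun r => (hder ω r).differentiableAt
    have h1 := hardy_ray m hm1 _ hgd hKω
    refine h1.trans ?_
    refine mul_le_mul_right ?_ _
    refine lintegral_mono_ae ?_
    filter_upwards [ae_restrict_mem measurableSet_Ioi] with r hr
    refine ENNReal.ofReal_le_ofReal ?_
    have hd : deriv (fun t : ℝ => u (t • (ω:E))) r = fderiv ℝ u (r • (ω:E)) (ω:E) :=
      (hder ω r).deriv
    have hle : ‖deriv (fun t : ℝ => u (t • (ω:E))) r‖ ≤ ‖fderiv ℝ u (r • (ω:E))‖ := by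
      rw [hd]
      have := (fderiv ℝ u (r • (ω:E))).le_opNorm (ω:E)
      rwa [mem_sphere_zero_iff_norm.mp ω.2, mul_one] at this
    have hr0 : (0:ℝ) < r := hr
    have hsq : ‖deriv (fun t : ℝ => u (t • (ω:E))) r‖^2 ≤ ‖fderiv ℝ u (r • (ω:E))‖^2 :=
      pow_le_pow_left₀ (norm_nonneg _) hle 2
    nlinarith [pow_nonneg hr0.le (m+1)]
  -- combine
  rw [hL, hR]
  have hc : ENNReal.ofReal ((2 / ((n:ℝ) - 2)) ^ 2) = ENNReal.ofReal ((2/(m:ℝ))^2) := by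
    rw [hmR]
  rw [hc, ← lintegral_const_mul' _ _ ENNReal.ofReal_ne_top]
  exact lintegral_mono_ae hmain

theorem stmt14 (n : ℕ) (hn : 3 ≤ n) (u : EuclideanSpace ℝ (Fin n) → ℂ)
    (hu : Differentiable ℝ u)
    (hu2 : MemLp u 2 (volume : Measure (EuclideanSpace ℝ (Fin n))))
    (hu2' : MemLp (fun x => fderiv ℝ u x) 2
      (volume : Measure (EuclideanSpace ℝ (Fin n)))) :
    ∫⁻ x : EuclideanSpace ℝ (Fin n),
        ENNReal.ofReal (‖x‖ ^ (-(2 : ℝ)) * ‖u x‖ ^ 2)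
      ≤ ENNReal.ofReal ((2 / ((n : ℝ) - 2)) ^ 2) *
          ∫⁻ x : EuclideanSpace ℝ (Fin n), ENNReal.ofReal (‖fderiv ℝ u x‖ ^ 2) := by
  exact hardy_aux n hn finrank_euclideanSpace_fin u hu hu2
end
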